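/- Let F be a field and m, m' nonsquare-class representatives in Fˣ. The involutions ι_A and ι_{A'} of SL(2,F), where A = !![0,1;m,0] and A' = !![0,1;m',0], are conjugate by an element of GL(2,F) (i.e. there exists Q ∈ GL(2,F) with ι_{A'} = ι_Q ∘ ι_A ∘ ι_Q⁻¹ on SL(2,F)) if m/m' is a square in Fˣ. -/
import Mathlib


open Matrix

theorem conjugate_involutions_of_square_class (F : Type*) [Field F] (hF : ringChar F ≠ 2)
    (m m' : F) (hm : m ≠ 0) (hm' : m' ≠ 0) (hsq : ∃ s : F, s ≠ 0 ∧ m / m' = s ^ 2) :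
    ∃ Q : GL (Fin 2) F, ∀ g : SpecialLinearGroup (Fin 2) F,
      !![0, 1; m', 0] * (g : Matrix (Fin 2) (Fin 2) F) * (!![0, 1; m', 0])⁻¹ =
        (Q : Matrix (Fin 2) (Fin 2) F) *
          (!![0, 1; m, 0] *
            ((Q⁻¹ : GL (Fin 2) F) * (g : Matrix (Fin 2) (Fin 2) F) *
              (Q : Matrix (Fin 2) (Fin 2) F)) *
            (!![0, 1; m, 0])⁻¹) *
          ((Q⁻¹ : GL (Fin 2) F) : Matrix (Fin 2) (Fin 2) F) := by
  obtain ⟨s, hs, hms⟩ := hsq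
  have hmm : m = s ^ 2 * m' := by field_simp at hms; linear_combination hms
  refine ⟨⟨!![s, 0; 0, 1], !![s⁻¹, 0; 0, 1], ?_, ?_⟩, ?_⟩
  · ext i j
    fin_cases i <;> fin_cases j <;>
      simp [Matrix.mul_apply, Fin.sum_univ_succ, mul_inv_cancel₀ hs]
  · ext i j
    fin_cases i <;> fin_cases j <;>
      simp [Matrix.mul_apply, Fin.sum_univ_succ, inv_mul_cancel₀ hs]
  · intro g
    have hA : (!![0, 1; m, 0])⁻¹ = !![0, m⁻¹; 1, 0] := by
      apply Matrix.inv_eq_left_inv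
      ext i j
      fin_cases i <;> fin_cases j <;>
        simp [Matrix.mul_apply, Fin.sum_univ_succ, inv_mul_cancel₀ hm]
    have hA' : (!![0, 1; m', 0])⁻¹ = !![0, m'⁻¹; 1, 0] := by
      apply Matrix.inv_eq_left_inv
      ext i j
      fin_cases i <;> fin_cases j <;>
        simp [Matrix.mul_apply, Fin.sum_univ_succ, inv_mul_cancel₀ hm']
    show _ = (!![s, 0; 0, 1] : Matrix (Fin 2) (Fin 2) F) *
      (_ * ((!![s⁻¹, 0; 0, 1] : Matrix (Fin 2) (Fin 2) F) * _ * _) * _) * _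
    rw [hA, hA']
    ext i j
    fin_cases i <;> fin_cases j <;>
      simp [Matrix.mul_apply, Matrix.vecMul, dotProduct, Matrix.vecHead,
        Matrix.vecTail, Fin.sum_univ_succ, hmm] <;> field_simp <;> ring
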